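/- Let G be a group with a normal subgroup D such that G/D is cyclic and every subgroup of D is normal in G. If H is a non-normal subgroup of G, then H is not contained in D, and writing H = ⟨h, H∩D⟩ with h ∈ H \ D, an element x ∈ G normalizes H if and only if [x,h] ∈ H. -/

import Mathlib

/-- Let `D ⊴ G` with `G/D` cyclic and every subgroup of `D` normal in `G`. If `H` is a
non-normal subgroup of `G`, then `H` is not contained in `D`, and whenever
`H = ⟨h⟩ ⊔ (H ⊓ D)` with `h ∈ H`, `h ∉ D`, an element `x` normalizes `H` iff
`[x,h] = x⁻¹h⁻¹xh ∈ H`. -/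
theorem normalizer_membership_iff_commutator
    {G : Type*} [Group G] (D : Subgroup G) [D.Normal]
    (hcyc : IsCyclic (G ⧸ D))
    (hall : ∀ K : Subgroup G, K ≤ D → K.Normal)
    (H : Subgroup G) (hH : ¬ H.Normal) :
    ¬ H ≤ D ∧
      ∀ h ∈ H, h ∉ D → H = Subgroup.closure {h} ⊔ (H ⊓ D) →
        ∀ x : G, x ∈ Subgroup.normalizer (H : Set G) ↔ x⁻¹ * h⁻¹ * x * h ∈ H := by
  constructor
  · intro hle
    exact hH (hall H hle)
  · intro h hhH hhD hgen x
    have hKnormal : (H ⊓ D).Normal := hall _ inf_le_right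
    -- every commutator lies in D since G/D is abelian
    have habel : ∀ p q : G ⧸ D, p * q = q * p := by
      letI : CommGroup (G ⧸ D) := hcyc.commGroup
      exact fun p q => mul_comm p q
    have hcomm : ∀ a b : G, a⁻¹ * b⁻¹ * a * b ∈ D := by
      intro a b
      apply (QuotientGroup.eq_one_iff _).mp
      simp only [QuotientGroup.mk_mul, QuotientGroup.mk_inv]
      rw [habel ((a : G ⧸ D))⁻¹ ((b : G ⧸ D))⁻¹]
      group
    -- conjugation stability lemma
    have claim : ∀ y : G, y * h * y⁻¹ ∈ H → ∀ g ∈ H, y * g * y⁻¹ ∈ H := by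
      intro y hy g hg
      have hle : Subgroup.closure {h} ⊔ (H ⊓ D) ≤
          Subgroup.comap (MulAut.conj y).toMonoidHom H := by
        rw [sup_le_iff]
        constructor
        · rw [Subgroup.closure_le]
          intro z hz
          rw [Set.mem_singleton_iff] at hz
          subst hz
          simpa using hy
        · intro k hk
          have : y * k * y⁻¹ ∈ H ⊓ D := hKnormal.conj_mem k hk y
          simpa using this.1
      have := hle (hgen ▸ hg)
      simpa using this
    constructor
    · intro hx
      have hx' : x⁻¹ ∈ Subgroup.normalizer (H : Set G) := inv_mem hx
      have : x⁻¹ * h⁻¹ * x ∈ H := by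
        have := (Subgroup.mem_normalizer_iff.mp hx' (h⁻¹)).mp (inv_mem hhH)
        simpa [mul_assoc] using this
      simpa [mul_assoc] using mul_mem this hhH
    · intro hc
      have hcK : x⁻¹ * h⁻¹ * x * h ∈ H ⊓ D := ⟨hc, hcomm x h⟩
      -- x⁻¹ h x ∈ H
      have h1 : x⁻¹ * h * x ∈ H := by
        have : (x⁻¹ * h⁻¹ * x * h)⁻¹ ∈ H := inv_mem hc
        have h2 : h * (x⁻¹ * h⁻¹ * x * h)⁻¹ ∈ H := mul_mem hhH this
        have : h * (x⁻¹ * h⁻¹ * x * h)⁻¹ = x⁻¹ * h * x := by group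
        rwa [this] at h2
      -- x h x⁻¹ ∈ H
      have h2 : x * h * x⁻¹ ∈ H := by
        have hconj : x * (x⁻¹ * h⁻¹ * x * h) * x⁻¹ ∈ H ⊓ D :=
          hKnormal.conj_mem _ hcK x
        have hH' : h⁻¹ * x * h * x⁻¹ ∈ H := by
          have : x * (x⁻¹ * h⁻¹ * x * h) * x⁻¹ = h⁻¹ * x * h * x⁻¹ := by group
          rw [this] at hconj
          exact hconj.1
        have h3 : h * (h⁻¹ * x * h * x⁻¹) ∈ H := mul_mem hhH hH'
        have : h * (h⁻¹ * x * h * x⁻¹) = x * h * x⁻¹ := by group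
        rwa [this] at h3
      rw [Subgroup.mem_normalizer_iff]
      intro g
      constructor
      · intro hg
        exact claim x h2 g hg
      · intro hg
        have h1' : x⁻¹ * h * (x⁻¹)⁻¹ ∈ H := by simpa using h1
        have := claim x⁻¹ h1' _ hg
        have heq : x⁻¹ * (x * g * x⁻¹) * (x⁻¹)⁻¹ = g := by group
        rwa [heq] at this
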